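/- Let ℓ be a positive integer and r an odd positive integer. Then the binary expansions of ℓ, 2r, and ℓ+r+1 are not pairwise disjoint. -/

import Mathlib

theorem stmt5 (l r : ℕ) (hl : 0 < l) (hr : Odd r) (hrpos : 0 < r) :
    ¬ (l &&& (2 * r) = 0 ∧ l &&& (l + r + 1) = 0 ∧ (2 * r) &&& (l + r + 1) = 0) := by
  rintro ⟨h1, h2, h3⟩
  obtain ⟨t, ht⟩ := hr
  -- disjointness at the bit level
  have bit : ∀ (a b : ℕ), a &&& b = 0 → ∀ i, a.testBit i = true → b.testBit i = false := by
    intro a b h i ha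
    have := congrArg (fun n => n.testBit i) h
    simp only [Nat.testBit_and, Nat.zero_testBit, ha, Bool.true_and] at this
    exact this
  have bit' : ∀ (a b : ℕ), a &&& b = 0 → ∀ i, b.testBit i = true → a.testBit i = false := by
    intro a b h i hb
    cases hab : a.testBit i with
    | false => rfl
    | true => have := bit a b h i hab; rw [hb] at this; exact absurd this (by simp)
  have tb : ∀ (n i : ℕ), n.testBit i = true ↔ n / 2 ^ i % 2 = 1 := by
    intro n i; rw [Nat.testBit_eq_decide_div_mod_eq]; simp
  have key : ∀ k, 2 ^ (k + 1) ∣ l ∧ 2 ^ (k + 1) ∣ (r + 1) := by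
    intro k
    induction k with
    | zero =>
      constructor
      · -- l is even
        rcases Nat.even_or_odd l with he | ho
        · obtain ⟨u, hu⟩ := he
          exact show 2 ∣ l from ⟨u, by omega⟩
        · exfalso
          obtain ⟨u, hu⟩ := ho
          have hlb : l.testBit 0 = true := by
            rw [tb]; simp; omega
          have hsb : (l + r + 1).testBit 0 = true := by
            rw [tb]; simp; omega
          have := bit l (l + r + 1) h2 0 hlb
          rw [hsb] at this; exact absurd this (by simp)
      · exact show 2 ∣ r + 1 from ⟨t + 1, by omega⟩
    | succ k ih =>
      obtain ⟨⟨a, ha⟩, ⟨m, hm⟩⟩ := ih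
      set p := 2 ^ (k + 1) with hp
      have hp2 : 2 ≤ p := by
        have : 2 ^ 1 ≤ 2 ^ (k + 1) := Nat.pow_le_pow_right (by norm_num) (by omega)
        simpa using this
      have hm1 : 1 ≤ m := by
        by_contra h
        have : m = 0 := by omega
        rw [this, Nat.mul_zero] at hm
        omega
      obtain ⟨m', rfl⟩ : ∃ m', m = m' + 1 := ⟨m - 1, by omega⟩
      have e1 : p * (2 * m' + 1) = 2 * (p * m') + p := by ring
      have e2 : p * (m' + 1) = p * m' + p := by ring
      rw [e2] at hm
      -- bit (k+1) of 2*r is set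
      have t2r : (2 * r).testBit (k + 1) = true := by
        rw [tb]
        have h2r : 2 * r = p * (2 * m' + 1) + (p - 2) := by rw [e1]; omega
        rw [← hp, h2r, Nat.mul_add_div (by omega)]
        have : (p - 2) / p = 0 := Nat.div_eq_of_lt (by omega)
        omega
      -- hence bit (k+1) of l and of l+r+1 are clear
      have tl : l.testBit (k + 1) = false := bit' l (2 * r) h1 (k + 1) t2r
      have ts : (l + r + 1).testBit (k + 1) = false := bit (2 * r) (l + r + 1) h3 (k + 1) t2r
      have hpp : 2 ^ (k + 1 + 1) = p * 2 := by rw [pow_succ]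
      have hla : l / p % 2 = 0 := by
        have h := tb l (k + 1)
        rw [tl] at h; simp at h; rw [← hp] at h; omega
      have ha2 : a % 2 = 0 := by
        rw [ha, Nat.mul_div_cancel_left _ (by omega : 0 < p)] at hla
        exact hla
      constructor
      · rw [hpp, ha]
        exact mul_dvd_mul_left p ⟨a / 2, by omega⟩
      · have hs : (l + r + 1) / p % 2 = 0 := by
          have h := tb (l + r + 1) (k + 1)
          rw [ts] at h; simp at h; rw [← hp] at h; omega
        have e3 : p * (a + (m' + 1)) = p * a + (p * m' + p) := by ring
        have hsum : l + r + 1 = p * (a + (m' + 1)) := by rw [e3]; omega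
        rw [hsum, Nat.mul_div_cancel_left _ (by omega : 0 < p)] at hs
        rw [hpp]
        have : r + 1 = p * (m' + 1) := by rw [e2]; omega
        rw [this]
        exact mul_dvd_mul_left p ⟨(m' + 1) / 2, by omega⟩
  have hd := (key l).1
  have hle : 2 ^ (l + 1) ≤ l := Nat.le_of_dvd hl hd
  have hlt : l < 2 ^ (l + 1) := by
    calc l < 2 ^ l := Nat.lt_two_pow_self
    _ ≤ 2 ^ (l + 1) := Nat.pow_le_pow_right (by norm_num) (by omega)
  omega
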